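/- The elements n_i (i ∈ I) of GL(M) satisfy the braid relations: for i ≠ j in I, letting m ≥ 2 be the order of s_i s_j in W, one has n_i n_j n_i ··· = n_j n_i n_j ··· with m factors on each side. -/

import Mathlib

noncomputable section

open scoped BigOperators

/-- `pr B x y` is the pairing `(x, y^∨) = 2(x,y)/(y,y)`. -/
def pr {E : Type} [AddCommGroup E] [Module ℚ E] (B : E →ₗ[ℚ] E →ₗ[ℚ] ℚ) (x y : E) : ℚ :=
  2 * B x y / B y y

/-- A reduced irreducible crystallographic root system `Φ` in a finite-dimensional ℚ-vector
space `E` equipped with a positive definite symmetric bilinear form, together with a system of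
simple roots `α i` (`i ∈ I`). -/
structure RootSystemCtx (E I : Type) [AddCommGroup E] [Module ℚ E] [Fintype I] : Type where
  B : E →ₗ[ℚ] E →ₗ[ℚ] ℚ
  Bsymm : ∀ x y, B x y = B y x
  Bpos : ∀ x, x ≠ 0 → 0 < B x x
  findim : FiniteDimensional ℚ E
  Φ : Set E
  Φfin : Φ.Finite
  zero_nmem : (0 : E) ∉ Φ
  reduced : ∀ a ∈ Φ, ∀ b ∈ Φ, b ≠ a → b ≠ -a → LinearIndependent ℚ ![a, b]
  crystal : ∀ a ∈ Φ, ∀ b ∈ Φ, ∃ n : ℤ, pr B b a = (n : ℚ)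
  reflect_mem : ∀ a ∈ Φ, ∀ b ∈ Φ, b - pr B b a • a ∈ Φ
  α : I → E
  α_mem : ∀ i, α i ∈ Φ
  α_indep : LinearIndependent ℚ α
  α_span : Submodule.span ℚ (Set.range α) = ⊤
  pos_neg : ∀ b ∈ Φ, (∃ cf : I → ℤ, (∀ i, 0 ≤ cf i) ∧ b = ∑ i, (cf i : ℚ) • α i) ∨
      (∃ cf : I → ℤ, (∀ i, cf i ≤ 0) ∧ b = ∑ i, (cf i : ℚ) • α i)
  irred : ¬ ∃ Φ₁ Φ₂ : Set E, Φ₁.Nonempty ∧ Φ₂.Nonempty ∧ Φ₁ ∪ Φ₂ = Φ ∧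
      ∀ a ∈ Φ₁, ∀ b ∈ Φ₂, B a b = 0

namespace RootSystemCtx

variable {E I : Type} [AddCommGroup E] [Module ℚ E] [Fintype I] (c : RootSystemCtx E I)

/-- The linear functional `(·, a^∨)`. -/
def coform (a : E) : Module.Dual ℚ E := (2 * (c.B a a)⁻¹) • (c.B.flip a)

lemma coform_apply (a x : E) : c.coform a x = pr c.B x a := by
  simp only [coform, LinearMap.smul_apply, LinearMap.flip_apply, smul_eq_mul, pr,
    div_eq_mul_inv]
  ring

lemma coform_self {a : E} (ha : a ∈ c.Φ) : c.coform a a = 2 := by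
  have h0 : a ≠ 0 := fun h => c.zero_nmem (h ▸ ha)
  have hB : c.B a a ≠ 0 := ne_of_gt (c.Bpos a h0)
  rw [coform_apply, pr]
  field_simp

/-- The simple reflection `s i : v ↦ v - (v, αᵢ^∨) αᵢ`. -/
def s (i : I) : E ≃ₗ[ℚ] E := Module.reflection (c.coform_self (c.α_mem i))

lemma s_apply (i : I) (v : E) : c.s i v = v - pr c.B v (c.α i) • c.α i := by
  rw [s, Module.reflection_apply, coform_apply]

/-- The Weyl group, as a subgroup of the group of linear automorphisms of `E`. -/
def Weyl : Subgroup (E ≃ₗ[ℚ] E) := Subgroup.closure (Set.range c.s)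

/-- `lam` is a minuscule (dominant) weight: a nonzero dominant weight (integral pairing
with every simple coroot) with `(lam, a^∨) ∈ {0, ±1}` for every root `a`. -/
def IsMinuscule (lam : E) : Prop :=
  lam ≠ 0 ∧ (∀ i, ∃ n : ℤ, pr c.B lam (c.α i) = (n : ℚ)) ∧ (∀ i, 0 ≤ pr c.B lam (c.α i)) ∧
    ∀ a ∈ c.Φ, pr c.B lam a = 0 ∨ pr c.B lam a = 1 ∨ pr c.B lam a = -1

/-- `b` is a positive root. -/
def IsPos (b : E) : Prop :=
  b ∈ c.Φ ∧ ∃ cf : I → ℚ, (∀ i, 0 ≤ cf i) ∧ b = ∑ i, cf i • c.α i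

end RootSystemCtx

/-- A nonempty union `Ψ` of Weyl group orbits of minuscule weights. -/
structure PsiData {E I : Type} [AddCommGroup E] [Module ℚ E] [Fintype I]
    (c : RootSystemCtx E I) : Type where
  Ψ : Set E
  nonempty : Ψ.Nonempty
  finite : Ψ.Finite
  orbit : ∀ μ ∈ Ψ, ∃ lam, c.IsMinuscule lam ∧ ∃ w ∈ c.Weyl, w lam = μ
  stab : ∀ μ ∈ Ψ, ∀ w ∈ c.Weyl, w μ ∈ Ψ

/-- `nOp e f i t tinv` is the operator `(1 + t eᵢ)(1 - t⁻¹ fᵢ)(1 + t eᵢ)`, where `tinv`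
is the inverse of `t`. -/
def nOp {I K M' : Type} [CommRing K] [AddCommGroup M'] [Module K M']
    (e f : I → Module.End K M') (i : I) (t tinv : K) : Module.End K M' :=
  (1 + t • e i) * (1 - tinv • f i) * (1 + t • e i)

/-- `hOp e f i t` is the operator `hᵢ(t) = nᵢ(t) nᵢ(-1)` for a unit `t`. -/
def hOp {I K M' : Type} [CommRing K] [AddCommGroup M'] [Module K M']
    (e f : I → Module.End K M') (i : I) (t : Kˣ) : Module.End K M' :=
  nOp e f i (t : K) ((t⁻¹ : Kˣ) : K) * nOp e f i ((-1 : Kˣ) : K) (((-1 : Kˣ)⁻¹ : Kˣ) : K)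

/-- Conjugation `n_{i₁} ⋯ n_{i_k} x n_{i_k}⁻¹ ⋯ n_{i₁}⁻¹` for a list `l = [i₁, …, i_k]`. -/
def conjOp {I M' : Type} [AddCommGroup M'] [Module ℂ M'] (nu : I → (Module.End ℂ M')ˣ)
    (x : Module.End ℂ M') (l : List I) : Module.End ℂ M' :=
  ↑((l.map nu).prod) * x * ↑(((l.map nu).prod)⁻¹)

attribute [local instance] LieRing.ofAssociativeRing

/-- The Lie subalgebra of `𝔤𝔩(M)` generated by the `eᵢ` and `fᵢ`. -/
def genLie {I M' : Type} [AddCommGroup M'] [Module ℂ M'] (e f : I → Module.End ℂ M') :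
    LieSubalgebra ℂ (Module.End ℂ M') :=
  LieSubalgebra.lieSpan ℂ (Module.End ℂ M') (Set.range e ∪ Set.range f)

/-- The root space `𝔤_a = {x ∈ 𝔤 ∣ [hⱼ, x] = (a, αⱼ^∨) x for all j}`, as a set. -/
def rootSet {E I M' : Type} [AddCommGroup E] [Module ℚ E] [Fintype I]
    [AddCommGroup M'] [Module ℂ M'] (c : RootSystemCtx E I)
    (e f h : I → Module.End ℂ M') (a : E) : Set (Module.End ℂ M') :=
  {x | x ∈ genLie e f ∧ ∀ j, ⁅h j, x⁆ = ((pr c.B a (c.α j) : ℚ) : ℂ) • x}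

/-- The root space `𝔤_a`, as a submodule of `𝔤𝔩(M)`. -/
def rootSp {E I M' : Type} [AddCommGroup E] [Module ℚ E] [Fintype I]
    [AddCommGroup M'] [Module ℂ M'] (c : RootSystemCtx E I)
    (e f h : I → Module.End ℂ M') (a : E) : Submodule ℂ (Module.End ℂ M') :=
  (genLie e f).toSubmodule ⊓ ⨅ j : I,
    Module.End.eigenspace
      (LinearMap.mulLeft ℂ (h j) - LinearMap.mulRight ℂ (h j) : Module.End ℂ (Module.End ℂ M'))
      ((pr c.B a (c.α j) : ℚ) : ℂ)

/-- The diagonal subgroup `H` generated by all `hᵢ(t)`, `t ∈ Kˣ`. -/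
def Hgroup {I K M' : Type} [CommRing K] [AddCommGroup M'] [Module K M']
    (e f : I → Module.End K M') : Subgroup (Module.End K M')ˣ :=
  Subgroup.closure {g | ∃ (i : I) (t : Kˣ), (g : Module.End K M') = hOp e f i t}

/-- The monomial subgroup `N` generated by all `nᵢ(t)`, `t ∈ Kˣ`. -/
def Ngroup {I K M' : Type} [CommRing K] [AddCommGroup M'] [Module K M']
    (e f : I → Module.End K M') : Subgroup (Module.End K M')ˣ :=
  Subgroup.closure {g | ∃ (i : I) (t : Kˣ),
    (g : Module.End K M') = nOp e f i (t : K) ((t⁻¹ : Kˣ) : K)}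

/-- The subgroup `U⁺` generated by all `x_γ(t) = 1 + t ē_γ` with `γ ∈ Φ⁺`. -/
def Uplus {E I K M' : Type} [AddCommGroup E] [Module ℚ E] [Fintype I]
    [CommRing K] [AddCommGroup M'] [Module K M'] (c : RootSystemCtx E I)
    (eb : E → Module.End K M') : Subgroup (Module.End K M')ˣ :=
  Subgroup.closure {g | ∃ γ, c.IsPos γ ∧ ∃ t : K, (g : Module.End K M') = 1 + t • eb γ}

/-- The subgroup `U⁻` generated by all `x_γ(t) = 1 + t ē_γ` with `γ ∈ Φ⁻`. -/
def Uminus {E I K M' : Type} [AddCommGroup E] [Module ℚ E] [Fintype I]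
    [CommRing K] [AddCommGroup M'] [Module K M'] (c : RootSystemCtx E I)
    (eb : E → Module.End K M') : Subgroup (Module.End K M')ˣ :=
  Subgroup.closure {g | ∃ γ, c.IsPos (-γ) ∧ ∃ t : K, (g : Module.End K M') = 1 + t • eb γ}

/-- The subgroup `Uᵢ⁺` generated by all `x_γ(t)` with `γ ∈ Φ⁺`, `γ ≠ αᵢ`. -/
def UplusI {E I K M' : Type} [AddCommGroup E] [Module ℚ E] [Fintype I]
    [CommRing K] [AddCommGroup M'] [Module K M'] (c : RootSystemCtx E I)
    (eb : E → Module.End K M') (i : I) : Subgroup (Module.End K M')ˣ :=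
  Subgroup.closure {g | ∃ γ, c.IsPos γ ∧ γ ≠ c.α i ∧ ∃ t : K, (g : Module.End K M') = 1 + t • eb γ}

section Helpers

variable {E I : Type} [AddCommGroup E] [Module ℚ E] [Fintype I]

lemma pr_sub (B : E →ₗ[ℚ] E →ₗ[ℚ] ℚ) (x y z : E) : pr B (x - y) z = pr B x z - pr B y z := by
  simp only [pr, map_sub, LinearMap.sub_apply, mul_sub, sub_div]

lemma pr_smul (B : E →ₗ[ℚ] E →ₗ[ℚ] ℚ) (t : ℚ) (x z : E) : pr B (t • x) z = t * pr B x z := by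
  simp only [pr, map_smul, LinearMap.smul_apply, smul_eq_mul]
  ring

namespace RootSystemCtx

variable (c : RootSystemCtx E I)

lemma alpha_ne_zero (i : I) : c.α i ≠ 0 := fun h => c.zero_nmem (h ▸ c.α_mem i)

lemma B_alpha_pos (i : I) : 0 < c.B (c.α i) (c.α i) := c.Bpos _ (c.alpha_ne_zero i)

lemma pr_self_root {a : E} (ha : a ∈ c.Φ) : pr c.B a a = 2 :=
  (c.coform_apply a a).symm.trans (c.coform_self ha)

lemma mul_s_apply (i j : I) (v : E) :
    (c.s i * c.s j) v =
      v - (pr c.B v (c.α i) - pr c.B v (c.α j) * pr c.B (c.α j) (c.α i)) • c.α i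
        - pr c.B v (c.α j) • c.α j := by
  show c.s i (c.s j v) = _
  rw [c.s_apply, c.s_apply, pr_sub, pr_smul]
  module

lemma s_B (k : I) (x y : E) : c.B (c.s k x) (c.s k y) = c.B x y := by
  have h : c.B (c.α k) (c.α k) ≠ 0 := ne_of_gt (c.B_alpha_pos k)
  rw [c.s_apply, c.s_apply]
  simp only [pr, map_sub, map_smul, LinearMap.sub_apply, LinearMap.smul_apply, smul_eq_mul]
  have hxy : c.B y (c.α k) = c.B (c.α k) y := c.Bsymm _ _
  field_simp
  ring_nf
  rw [hxy]
  ring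

lemma s_mem_Phi (k : I) {b : E} (hb : b ∈ c.Φ) : c.s k b ∈ c.Φ := by
  rw [c.s_apply]
  exact c.reflect_mem _ (c.α_mem k) _ hb

lemma s_mem_weyl (k : I) : c.s k ∈ c.Weyl := Subgroup.subset_closure ⟨k, rfl⟩

lemma s_inv (k : I) : (c.s k)⁻¹ = c.s k := by
  show (c.s k).symm = c.s k
  exact Module.reflection_symm _

lemma weyl_prop {w : E ≃ₗ[ℚ] E} (hw : w ∈ c.Weyl) :
    (∀ x y, c.B (w x) (w y) = c.B x y) ∧ (∀ a ∈ c.Φ, w a ∈ c.Φ) ∧ (∀ a ∈ c.Φ, w⁻¹ a ∈ c.Φ) := by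
  induction hw using Subgroup.closure_induction with
  | mem x hx =>
    obtain ⟨k, rfl⟩ := hx
    exact ⟨c.s_B k, fun a ha => c.s_mem_Phi k ha,
      fun a ha => by rw [c.s_inv]; exact c.s_mem_Phi k ha⟩
  | one => exact ⟨fun x y => rfl, fun a ha => ha, fun a ha => by simpa using ha⟩
  | mul u v hu hv ihu ihv =>
    refine ⟨fun x y => ?_, fun a ha => ?_, fun a ha => ?_⟩
    · show c.B (u (v x)) (u (v y)) = _
      rw [ihu.1, ihv.1]
    · exact ihu.2.1 _ (ihv.2.1 _ ha)
    · rw [mul_inv_rev]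
      exact ihv.2.2 _ (ihu.2.2 _ ha)
  | inv u hu ihu =>
    refine ⟨fun x y => ?_, fun a ha => ihu.2.2 _ ha, fun a ha => by simpa using ihu.2.1 _ ha⟩
    have h1 : ∀ z : E, u (u⁻¹ z) = z := fun z => by
      have : (u * u⁻¹) z = z := by rw [mul_inv_cancel]; rfl
      exact this
    conv_rhs => rw [← h1 x, ← h1 y]
    rw [ihu.1]

lemma minuscule_pair (P : PsiData c) {v : E} (hv : v ∈ P.Ψ) {a : E} (ha : a ∈ c.Φ) :
    pr c.B v a = 0 ∨ pr c.B v a = 1 ∨ pr c.B v a = -1 := by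
  obtain ⟨lam, hlam, w, hw, rfl⟩ := P.orbit v hv
  have hprop := c.weyl_prop hw
  have hwa : w⁻¹ a ∈ c.Φ := hprop.2.2 a ha
  have h1 : ∀ z : E, w (w⁻¹ z) = z := fun z => by
    have : (w * w⁻¹) z = z := by rw [mul_inv_cancel]; rfl
    exact this
  have key : pr c.B (w lam) a = pr c.B lam (w⁻¹ a) := by
    unfold pr
    rw [← hprop.1 lam (w⁻¹ a), ← hprop.1 (w⁻¹ a) (w⁻¹ a), h1 a]
  rw [key]
  exact hlam.2.2.2 _ hwa

lemma mem_reflect' (P : PsiData c) {v : E} (hv : v ∈ P.Ψ) (k : I) :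
    v - pr c.B v (c.α k) • c.α k ∈ P.Ψ := by
  have := P.stab v hv _ (c.s_mem_weyl k)
  rwa [c.s_apply] at this

end RootSystemCtx
end Helpers
section Action

variable {E I : Type} [AddCommGroup E] [Module ℚ E] [Fintype I]
variable (c : RootSystemCtx E I) (P : PsiData c)
variable {M : Type} [AddCommGroup M] [Module ℂ M]

lemma smul_z_congr (z : Module.Basis P.Ψ ℂ M) {c1 c2 : ℂ} {v1 v2 : E}
    {h1 : v1 ∈ P.Ψ} {h2 : v2 ∈ P.Ψ} (hc : c1 = c2) (hv : v1 = v2) :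
    c1 • z ⟨v1, h1⟩ = c2 • z ⟨v2, h2⟩ := by
  subst hv; subst hc; rfl

lemma nOp_apply_z (z : Module.Basis P.Ψ ℂ M) (e f : I → Module.End ℂ M)
    (he1 : ∀ (i : I) (μ : P.Ψ) (hm : (μ : E) + c.α i ∈ P.Ψ),
      pr c.B (μ : E) (c.α i) = -1 → e i (z μ) = z ⟨(μ : E) + c.α i, hm⟩)
    (he0 : ∀ (i : I) (μ : P.Ψ), pr c.B (μ : E) (c.α i) ≠ -1 → e i (z μ) = 0)
    (hf1 : ∀ (i : I) (μ : P.Ψ) (hm : (μ : E) - c.α i ∈ P.Ψ),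
      pr c.B (μ : E) (c.α i) = 1 → f i (z μ) = z ⟨(μ : E) - c.α i, hm⟩)
    (hf0 : ∀ (i : I) (μ : P.Ψ), pr c.B (μ : E) (c.α i) ≠ 1 → f i (z μ) = 0)
    (k : I) (μ : P.Ψ) :
    nOp e f k 1 1 (z μ) =
      ((1 - pr c.B (μ : E) (c.α k) - pr c.B (μ : E) (c.α k) * pr c.B (μ : E) (c.α k) : ℚ) : ℂ) •
        z ⟨(μ : E) - pr c.B (μ : E) (c.α k) • c.α k, c.mem_reflect' P μ.2 k⟩ := by
  have hkk : pr c.B (c.α k) (c.α k) = 2 := c.pr_self_root (c.α_mem k)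
  have hexp : ∀ m : M, nOp e f k 1 1 m =
      m + e k m - (f k m + f k (e k m))
        + (e k m + e k (e k m) - (e k (f k m) + e k (f k (e k m)))) := by
    intro m
    simp only [nOp, one_smul, Module.End.mul_apply, LinearMap.add_apply, LinearMap.sub_apply,
      Module.End.one_apply, map_add, map_sub]
    try abel
  rcases c.minuscule_pair P μ.2 (c.α_mem k) with hp | hp | hp
  · -- pairing 0
    have he : e k (z μ) = 0 := he0 k μ (by rw [hp]; norm_num)
    have hf : f k (z μ) = 0 := hf0 k μ (by rw [hp]; norm_num)
    have hR : ((1 - pr c.B (μ : E) (c.α k) - pr c.B (μ : E) (c.α k) * pr c.B (μ : E) (c.α k) : ℚ) : ℂ) •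
          z ⟨(μ : E) - pr c.B (μ : E) (c.α k) • c.α k, c.mem_reflect' P μ.2 k⟩
        = (1 : ℂ) • z μ :=
      smul_z_congr c P z (by rw [hp]; norm_num) (by rw [hp]; module)
    rw [hexp, he, hf, hR, one_smul]
    simp only [map_zero, add_zero, zero_add, sub_zero, zero_sub]
    try abel
  · -- pairing 1
    have hm : (μ : E) - c.α k ∈ P.Ψ := by
      have := c.mem_reflect' P μ.2 k
      rwa [hp, one_smul] at this
    have he : e k (z μ) = 0 := he0 k μ (by rw [hp]; norm_num)
    have hf : f k (z μ) = z ⟨(μ : E) - c.α k, hm⟩ := hf1 k μ hm hp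
    have hm2 : ((μ : E) - c.α k) + c.α k ∈ P.Ψ := by
      rw [sub_add_cancel]; exact μ.2
    have hef : e k (z ⟨(μ : E) - c.α k, hm⟩) = z μ := by
      have hpr2 : pr c.B ((μ : E) - c.α k) (c.α k) = -1 := by
        rw [pr_sub, hp, hkk]; norm_num
      rw [he1 k ⟨(μ : E) - c.α k, hm⟩ hm2 hpr2]
      exact congrArg z (Subtype.ext (sub_add_cancel _ _))
    have hR : ((1 - pr c.B (μ : E) (c.α k) - pr c.B (μ : E) (c.α k) * pr c.B (μ : E) (c.α k) : ℚ) : ℂ) •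
          z ⟨(μ : E) - pr c.B (μ : E) (c.α k) • c.α k, c.mem_reflect' P μ.2 k⟩
        = (-1 : ℂ) • z ⟨(μ : E) - c.α k, hm⟩ :=
      smul_z_congr c P z (by rw [hp]; norm_num) (by rw [hp, one_smul])
    rw [hexp, he, hf, hef, hR, neg_one_smul]
    simp only [map_zero, add_zero, zero_add, sub_zero, zero_sub]
    try abel
  · -- pairing -1
    have hm : (μ : E) + c.α k ∈ P.Ψ := by
      have := c.mem_reflect' P μ.2 k
      rw [hp] at this
      rwa [neg_smul, one_smul, sub_neg_eq_add] at this
    have he : e k (z μ) = z ⟨(μ : E) + c.α k, hm⟩ := he1 k μ hm hp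
    have hf : f k (z μ) = 0 := hf0 k μ (by rw [hp]; norm_num)
    have hpr2 : pr c.B ((μ : E) + c.α k) (c.α k) = 1 := by
      have h3 := pr_sub c.B ((μ : E) + c.α k) (c.α k) (c.α k)
      rw [add_sub_cancel_right] at h3
      have : pr c.B ((μ : E) + c.α k) (c.α k)
          = pr c.B (μ : E) (c.α k) + pr c.B (c.α k) (c.α k) := by linarith
      rw [this, hp, hkk]; norm_num
    have hfe : f k (z ⟨(μ : E) + c.α k, hm⟩) = z μ := by
      have hm2 : ((μ : E) + c.α k) - c.α k ∈ P.Ψ := by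
        rw [add_sub_cancel_right]; exact μ.2
      rw [hf1 k ⟨(μ : E) + c.α k, hm⟩ hm2 hpr2]
      exact congrArg z (Subtype.ext (add_sub_cancel_right _ _))
    have hee : e k (z ⟨(μ : E) + c.α k, hm⟩) = 0 := by
      apply he0
      rw [hpr2]; norm_num
    have hR : ((1 - pr c.B (μ : E) (c.α k) - pr c.B (μ : E) (c.α k) * pr c.B (μ : E) (c.α k) : ℚ) : ℂ) •
          z ⟨(μ : E) - pr c.B (μ : E) (c.α k) • c.α k, c.mem_reflect' P μ.2 k⟩
        = (1 : ℂ) • z ⟨(μ : E) + c.α k, hm⟩ :=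
      smul_z_congr c P z (by rw [hp]; norm_num) (by rw [hp]; module)
    rw [hexp, he, hf, hfe, hee, he, hR, one_smul]
    simp only [map_zero, add_zero, zero_add, sub_zero, zero_sub]
    try abel

end Action
section BraidCases

variable {E I : Type} [AddCommGroup E] [Module ℚ E] [Fintype I]
variable (c : RootSystemCtx E I) (P : PsiData c)
variable {M : Type} [AddCommGroup M] [Module ℂ M]

lemma braid_case2 (z : Module.Basis P.Ψ ℂ M) (e f : I → Module.End ℂ M)
    (hstep : ∀ (k : I) (μ : P.Ψ), nOp e f k 1 1 (z μ) =
      ((1 - pr c.B (μ : E) (c.α k) - pr c.B (μ : E) (c.α k) * pr c.B (μ : E) (c.α k) : ℚ) : ℂ) •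
        z ⟨(μ : E) - pr c.B (μ : E) (c.α k) • c.α k, c.mem_reflect' P μ.2 k⟩)
    (i j : I) (ha : pr c.B (c.α j) (c.α i) = 0) (hb : pr c.B (c.α i) (c.α j) = 0) :
    nOp e f i 1 1 * nOp e f j 1 1 = nOp e f j 1 1 * nOp e f i 1 1 := by
  have hii : pr c.B (c.α i) (c.α i) = 2 := c.pr_self_root (c.α_mem i)
  have hjj : pr c.B (c.α j) (c.α j) = 2 := c.pr_self_root (c.α_mem j)
  refine z.ext fun μ => ?_
  rcases c.minuscule_pair P μ.2 (c.α_mem i) with hp | hp | hp <;>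
    rcases c.minuscule_pair P μ.2 (c.α_mem j) with hq | hq | hq <;>
  · simp only [Module.End.mul_apply, hstep, map_smul, smul_smul, pr_sub, pr_smul,
      hp, hq, ha, hb, hii, hjj]
    exact smul_z_congr c P z (by push_cast; ring_nf) (by module)

end BraidCases
section BraidCases2

variable {E I : Type} [AddCommGroup E] [Module ℚ E] [Fintype I]
variable (c : RootSystemCtx E I) (P : PsiData c)
variable {M : Type} [AddCommGroup M] [Module ℂ M]

lemma braid_case3 (z : Module.Basis P.Ψ ℂ M) (e f : I → Module.End ℂ M)
    (hstep : ∀ (k : I) (μ : P.Ψ), nOp e f k 1 1 (z μ) =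
      ((1 - pr c.B (μ : E) (c.α k) - pr c.B (μ : E) (c.α k) * pr c.B (μ : E) (c.α k) : ℚ) : ℂ) •
        z ⟨(μ : E) - pr c.B (μ : E) (c.α k) • c.α k, c.mem_reflect' P μ.2 k⟩)
    (i j : I) (ha : pr c.B (c.α j) (c.α i) = -1) (hb : pr c.B (c.α i) (c.α j) = -1) :
    nOp e f i 1 1 * (nOp e f j 1 1 * nOp e f i 1 1)
      = nOp e f j 1 1 * (nOp e f i 1 1 * nOp e f j 1 1) := by
  have hii : pr c.B (c.α i) (c.α i) = 2 := c.pr_self_root (c.α_mem i)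
  have hjj : pr c.B (c.α j) (c.α j) = 2 := c.pr_self_root (c.α_mem j)
  refine z.ext fun μ => ?_
  have hx := c.minuscule_pair P (c.mem_reflect' P μ.2 j) (c.α_mem i)
  rcases c.minuscule_pair P μ.2 (c.α_mem i) with hp | hp | hp <;>
    rcases c.minuscule_pair P μ.2 (c.α_mem j) with hq | hq | hq <;>
  · first
    | (exfalso; simp only [pr_sub, pr_smul, hp, hq, ha, hb, hii, hjj] at hx; norm_num at hx; done)
    | (simp only [Module.End.mul_apply, hstep, map_smul, smul_smul, pr_sub, pr_smul,
        hp, hq, ha, hb, hii, hjj]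
       exact smul_z_congr c P z (by push_cast; ring_nf) (by module))

lemma braid_case4 (z : Module.Basis P.Ψ ℂ M) (e f : I → Module.End ℂ M)
    (hstep : ∀ (k : I) (μ : P.Ψ), nOp e f k 1 1 (z μ) =
      ((1 - pr c.B (μ : E) (c.α k) - pr c.B (μ : E) (c.α k) * pr c.B (μ : E) (c.α k) : ℚ) : ℂ) •
        z ⟨(μ : E) - pr c.B (μ : E) (c.α k) • c.α k, c.mem_reflect' P μ.2 k⟩)
    (i j : I) (ha : pr c.B (c.α j) (c.α i) = -1) (hb : pr c.B (c.α i) (c.α j) = -2) :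
    nOp e f i 1 1 * (nOp e f j 1 1 * (nOp e f i 1 1 * nOp e f j 1 1))
      = nOp e f j 1 1 * (nOp e f i 1 1 * (nOp e f j 1 1 * nOp e f i 1 1)) := by
  have hii : pr c.B (c.α i) (c.α i) = 2 := c.pr_self_root (c.α_mem i)
  have hjj : pr c.B (c.α j) (c.α j) = 2 := c.pr_self_root (c.α_mem j)
  refine z.ext fun μ => ?_
  have hx := c.minuscule_pair P (c.mem_reflect' P μ.2 i) (c.α_mem j)
  rcases c.minuscule_pair P μ.2 (c.α_mem i) with hp | hp | hp <;>
    rcases c.minuscule_pair P μ.2 (c.α_mem j) with hq | hq | hq <;>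
  · first
    | (exfalso; simp only [pr_sub, pr_smul, hp, hq, ha, hb, hii, hjj] at hx; norm_num at hx; done)
    | (simp only [Module.End.mul_apply, hstep, map_smul, smul_smul, pr_sub, pr_smul,
        hp, hq, ha, hb, hii, hjj]
       exact smul_z_congr c P z (by push_cast; ring_nf) (by module))

lemma braid_case6 (z : Module.Basis P.Ψ ℂ M) (e f : I → Module.End ℂ M)
    (hstep : ∀ (k : I) (μ : P.Ψ), nOp e f k 1 1 (z μ) =
      ((1 - pr c.B (μ : E) (c.α k) - pr c.B (μ : E) (c.α k) * pr c.B (μ : E) (c.α k) : ℚ) : ℂ) •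
        z ⟨(μ : E) - pr c.B (μ : E) (c.α k) • c.α k, c.mem_reflect' P μ.2 k⟩)
    (i j : I) (ha : pr c.B (c.α j) (c.α i) = -1) (hb : pr c.B (c.α i) (c.α j) = -3) :
    nOp e f i 1 1 * (nOp e f j 1 1 * (nOp e f i 1 1 * (nOp e f j 1 1 *
      (nOp e f i 1 1 * nOp e f j 1 1))))
      = nOp e f j 1 1 * (nOp e f i 1 1 * (nOp e f j 1 1 * (nOp e f i 1 1 *
        (nOp e f j 1 1 * nOp e f i 1 1)))) := by
  have hii : pr c.B (c.α i) (c.α i) = 2 := c.pr_self_root (c.α_mem i)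
  have hjj : pr c.B (c.α j) (c.α j) = 2 := c.pr_self_root (c.α_mem j)
  refine z.ext fun μ => ?_
  have hx := c.minuscule_pair P (c.mem_reflect' P μ.2 i) (c.α_mem j)
  have hy := c.minuscule_pair P
    (c.mem_reflect' P (c.mem_reflect' P μ.2 j) i) (c.α_mem j)
  rcases c.minuscule_pair P μ.2 (c.α_mem i) with hp | hp | hp <;>
    rcases c.minuscule_pair P μ.2 (c.α_mem j) with hq | hq | hq <;>
  · first
    | (exfalso; simp only [pr_sub, pr_smul, hp, hq, ha, hb, hii, hjj] at hx hy;
       norm_num at hx hy; done)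
    | (simp only [Module.End.mul_apply, hstep, map_smul, smul_smul, pr_sub, pr_smul,
        hp, hq, ha, hb, hii, hjj]
       exact smul_z_congr c P z (by push_cast; ring_nf) (by module))

end BraidCases2
section OrderLemmas

variable {E I : Type} [AddCommGroup E] [Module ℚ E] [Fintype I]
variable (c : RootSystemCtx E I)

lemma pair_indep (i j : I) (hij : i ≠ j) :
    ∀ s t : ℚ, s • c.α i + t • c.α j = 0 → s = 0 ∧ t = 0 := by
  have hinj : Function.Injective (![i, j]) := by
    intro x y hxy
    fin_cases x <;> fin_cases y <;> simp_all
  have h2 : LinearIndependent ℚ ![c.α i, c.α j] := by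
    have h3 := c.α_indep.comp ![i, j] hinj
    have h4 : c.α ∘ ![i, j] = ![c.α i, c.α j] := by
      funext x; fin_cases x <;> rfl
    rwa [h4] at h3
  exact fun s t h => LinearIndependent.pair_iff.mp h2 s t h

lemma pow_apply_succ' (g : E ≃ₗ[ℚ] E) (n : ℕ) (v : E) : (g ^ (n + 1)) v = g ((g ^ n) v) := by
  rw [pow_succ']; rfl

end OrderLemmas
section OrdCases

variable {E I : Type} [AddCommGroup E] [Module ℚ E] [Fintype I]
variable (c : RootSystemCtx E I)

lemma order_from_bounds {G : Type*} [Group G] (g : G) {m : ℕ}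
    (hm : m = 2 ∨ m = 3 ∨ m = 4 ∨ m = 6)
    (hpow : g ^ m = 1)
    (hne : ∀ k : ℕ, 0 < k → k < m → k ∣ m → g ^ k ≠ 1) : orderOf g = m := by
  have hdvd : orderOf g ∣ m := orderOf_dvd_of_pow_eq_one hpow
  have hmpos : 0 < m := by rcases hm with h|h|h|h <;> omega
  have hpos : 0 < orderOf g := Nat.pos_of_dvd_of_pos hdvd hmpos
  have hle : orderOf g ≤ m := Nat.le_of_dvd hmpos hdvd
  rcases lt_or_eq_of_le hle with hlt | heq
  · exact absurd (pow_orderOf_eq_one g) (hne _ hpos hlt hdvd)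
  · exact heq

lemma ord_case3 (i j : I) (hij : i ≠ j)
    (ha : pr c.B (c.α j) (c.α i) = -1) (hb : pr c.B (c.α i) (c.α j) = -1) :
    orderOf (c.s i * c.s j) = 3 := by
  have hii : pr c.B (c.α i) (c.α i) = 2 := c.pr_self_root (c.α_mem i)
  have hjj : pr c.B (c.α j) (c.α j) = 2 := c.pr_self_root (c.α_mem j)
  set g := c.s i * c.s j with hg
  have h1 : ∀ v : E, g v = v - (pr c.B v (c.α i) + pr c.B v (c.α j)) • c.α i
      - pr c.B v (c.α j) • c.α j := by
    intro v
    rw [hg, c.mul_s_apply, ha]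
    module
  have h2 : ∀ v : E, g (g v) = v - pr c.B v (c.α i) • c.α i
      - (pr c.B v (c.α i) + pr c.B v (c.α j)) • c.α j := by
    intro v
    rw [h1 (g v), h1 v]
    simp only [pr_sub, pr_smul, ha, hb, hii, hjj]
    module
  have h3 : ∀ v : E, g (g (g v)) = v := by
    intro v
    rw [h1 (g (g v)), h2 v]
    simp only [pr_sub, pr_smul, ha, hb, hii, hjj]
    module
  refine order_from_bounds g (by norm_num) ?_ ?_
  · have h30 : (3 : ℕ) = 2 + 1 := rfl
    rw [h30, pow_succ, pow_two]
    exact LinearEquiv.ext fun v => h3 v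
  · intro k hk0 hk3 _
    interval_cases k
    · intro heq
      have h5 : g (c.α i) = c.α i := by
        have : (g ^ 1) (c.α i) = c.α i := by rw [heq]; rfl
        rwa [pow_one] at this
      rw [h1, hii, hb] at h5
      rw [sub_sub, sub_eq_self] at h5
      obtain ⟨hs, ht⟩ := pair_indep c i j hij _ _ h5
      norm_num at hs
    · intro heq
      have h5 : g (g (c.α i)) = c.α i := by
        have : (g ^ 2) (c.α i) = c.α i := by rw [heq]; rfl
        rwa [pow_two] at this
      rw [h2, hii, hb] at h5
      rw [sub_sub, sub_eq_self] at h5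
      obtain ⟨hs, ht⟩ := pair_indep c i j hij _ _ h5
      norm_num at hs

end OrdCases
section OrdCases2

variable {E I : Type} [AddCommGroup E] [Module ℚ E] [Fintype I]
variable (c : RootSystemCtx E I)

lemma ord_case2 (i j : I) (hij : i ≠ j)
    (ha : pr c.B (c.α j) (c.α i) = 0) (hb : pr c.B (c.α i) (c.α j) = 0) :
    orderOf (c.s i * c.s j) = 2 := by
  have hii : pr c.B (c.α i) (c.α i) = 2 := c.pr_self_root (c.α_mem i)
  have hjj : pr c.B (c.α j) (c.α j) = 2 := c.pr_self_root (c.α_mem j)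
  set g := c.s i * c.s j with hg
  have h1 : ∀ v : E, g v = v - pr c.B v (c.α i) • c.α i - pr c.B v (c.α j) • c.α j := by
    intro v
    rw [hg, c.mul_s_apply, ha]
    module
  have h2 : ∀ v : E, g (g v) = v := by
    intro v
    rw [h1 (g v), h1 v]
    simp only [pr_sub, pr_smul, ha, hb, hii, hjj]
    module
  refine order_from_bounds g (by norm_num) ?_ ?_
  · rw [pow_two]
    exact LinearEquiv.ext fun v => h2 v
  · intro k hk0 hk2 _
    interval_cases k
    intro heq
    have h5 : g (c.α i) = c.α i := by
      have : (g ^ 1) (c.α i) = c.α i := by rw [heq]; rfl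
      rwa [pow_one] at this
    rw [h1, hii, hb] at h5
    rw [sub_sub, sub_eq_self] at h5
    obtain ⟨hs, ht⟩ := pair_indep c i j hij _ _ h5
    norm_num at hs

lemma ord_case4 (i j : I) (hij : i ≠ j)
    (ha : pr c.B (c.α j) (c.α i) = -1) (hb : pr c.B (c.α i) (c.α j) = -2) :
    orderOf (c.s i * c.s j) = 4 := by
  have hii : pr c.B (c.α i) (c.α i) = 2 := c.pr_self_root (c.α_mem i)
  have hjj : pr c.B (c.α j) (c.α j) = 2 := c.pr_self_root (c.α_mem j)
  set g := c.s i * c.s j with hg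
  have h1 : ∀ v : E, g v = v - (pr c.B v (c.α i) + pr c.B v (c.α j)) • c.α i
      - pr c.B v (c.α j) • c.α j := by
    intro v
    rw [hg, c.mul_s_apply, ha]
    module
  have h2 : ∀ v : E, g (g v) = v
      - (2 * pr c.B v (c.α i) + pr c.B v (c.α j)) • c.α i
      - (2 * pr c.B v (c.α i) + 2 * pr c.B v (c.α j)) • c.α j := by
    intro v
    rw [h1 (g v), h1 v]
    simp only [pr_sub, pr_smul, ha, hb, hii, hjj]
    module
  have h3 : ∀ v : E, g (g (g v)) = v - pr c.B v (c.α i) • c.α i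
      - (2 * pr c.B v (c.α i) + pr c.B v (c.α j)) • c.α j := by
    intro v
    rw [h1 (g (g v)), h2 v]
    simp only [pr_sub, pr_smul, ha, hb, hii, hjj]
    module
  have h4 : ∀ v : E, g (g (g (g v))) = v := by
    intro v
    rw [h1 (g (g (g v))), h3 v]
    simp only [pr_sub, pr_smul, ha, hb, hii, hjj]
    module
  refine order_from_bounds g (by norm_num) ?_ ?_
  · have h40 : (4 : ℕ) = 2 + 1 + 1 := rfl
    rw [h40, pow_succ, pow_succ, pow_two]
    exact LinearEquiv.ext fun v => h4 v
  · intro k hk0 hk4 hdvd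
    interval_cases k
    · intro heq
      have h5 : g (c.α i) = c.α i := by
        have : (g ^ 1) (c.α i) = c.α i := by rw [heq]; rfl
        rwa [pow_one] at this
      rw [h1, hii, hb] at h5
      rw [sub_sub, sub_eq_self] at h5
      obtain ⟨hs, ht⟩ := pair_indep c i j hij _ _ h5
      norm_num at hs ht
    · intro heq
      have h5 : g (g (c.α i)) = c.α i := by
        have : (g ^ 2) (c.α i) = c.α i := by rw [heq]; rfl
        rwa [pow_two] at this
      rw [h2, hii, hb] at h5
      rw [sub_sub, sub_eq_self] at h5
      obtain ⟨hs, ht⟩ := pair_indep c i j hij _ _ h5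
      norm_num at hs
    · omega

lemma ord_case6 (i j : I) (hij : i ≠ j)
    (ha : pr c.B (c.α j) (c.α i) = -1) (hb : pr c.B (c.α i) (c.α j) = -3) :
    orderOf (c.s i * c.s j) = 6 := by
  have hii : pr c.B (c.α i) (c.α i) = 2 := c.pr_self_root (c.α_mem i)
  have hjj : pr c.B (c.α j) (c.α j) = 2 := c.pr_self_root (c.α_mem j)
  set g := c.s i * c.s j with hg
  have h1 : ∀ v : E, g v = v - (pr c.B v (c.α i) + pr c.B v (c.α j)) • c.α i
      - pr c.B v (c.α j) • c.α j := by
    intro v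
    rw [hg, c.mul_s_apply, ha]
    module
  have h2 : ∀ v : E, g (g v) = v
      - (3 * pr c.B v (c.α i) + 2 * pr c.B v (c.α j)) • c.α i
      - (3 * pr c.B v (c.α i) + 3 * pr c.B v (c.α j)) • c.α j := by
    intro v
    rw [h1 (g v), h1 v]
    simp only [pr_sub, pr_smul, ha, hb, hii, hjj]
    module
  have h3 : ∀ v : E, g (g (g v)) = v
      - (4 * pr c.B v (c.α i) + 2 * pr c.B v (c.α j)) • c.α i
      - (6 * pr c.B v (c.α i) + 4 * pr c.B v (c.α j)) • c.α j := by
    intro v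
    rw [h1 (g (g v)), h2 v]
    simp only [pr_sub, pr_smul, ha, hb, hii, hjj]
    module
  have h4 : ∀ v : E, g (g (g (g v))) = v
      - (3 * pr c.B v (c.α i) + pr c.B v (c.α j)) • c.α i
      - (6 * pr c.B v (c.α i) + 3 * pr c.B v (c.α j)) • c.α j := by
    intro v
    rw [h1 (g (g (g v))), h3 v]
    simp only [pr_sub, pr_smul, ha, hb, hii, hjj]
    module
  have h5 : ∀ v : E, g (g (g (g (g v)))) = v
      - pr c.B v (c.α i) • c.α i
      - (3 * pr c.B v (c.α i) + pr c.B v (c.α j)) • c.α j := by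
    intro v
    rw [h1 (g (g (g (g v)))), h4 v]
    simp only [pr_sub, pr_smul, ha, hb, hii, hjj]
    module
  have h6 : ∀ v : E, g (g (g (g (g (g v))))) = v := by
    intro v
    rw [h1 (g (g (g (g (g v))))), h5 v]
    simp only [pr_sub, pr_smul, ha, hb, hii, hjj]
    module
  refine order_from_bounds g (by norm_num) ?_ ?_
  · have h60 : (6 : ℕ) = 2 + 1 + 1 + 1 + 1 := rfl
    rw [h60, pow_succ, pow_succ, pow_succ, pow_succ, pow_two]
    exact LinearEquiv.ext fun v => h6 v
  · intro k hk0 hk6 hdvd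
    interval_cases k
    · intro heq
      have hh : g (c.α i) = c.α i := by
        have : (g ^ 1) (c.α i) = c.α i := by rw [heq]; rfl
        rwa [pow_one] at this
      rw [h1, hii, hb] at hh
      rw [sub_sub, sub_eq_self] at hh
      obtain ⟨hs, ht⟩ := pair_indep c i j hij _ _ hh
      norm_num at hs
    · intro heq
      have hh : g (g (c.α i)) = c.α i := by
        have : (g ^ 2) (c.α i) = c.α i := by rw [heq]; rfl
        rwa [pow_two] at this
      rw [h2, hii, hb] at hh
      rw [sub_sub, sub_eq_self] at hh
      obtain ⟨hs, ht⟩ := pair_indep c i j hij _ _ hh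
      norm_num at hs ht
    · intro heq
      have hh : g (g (g (c.α i))) = c.α i := by
        have h30 : (3 : ℕ) = 2 + 1 := rfl
        have : (g ^ 3) (c.α i) = c.α i := by rw [heq]; rfl
        rwa [h30, pow_succ, pow_two] at this
      rw [h3, hii, hb] at hh
      rw [sub_sub, sub_eq_self] at hh
      obtain ⟨hs, ht⟩ := pair_indep c i j hij _ _ hh
      norm_num at hs
    · omega
    · omega

end OrdCases2
section Cartan

variable {E I : Type} [AddCommGroup E] [Module ℚ E] [Fintype I]
variable (c : RootSystemCtx E I)

lemma pr_alpha_nonpos (i j : I) (hij : i ≠ j) : pr c.B (c.α j) (c.α i) ≤ 0 := by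
  by_contra hpos
  push_neg at hpos
  have hβ : c.α j - pr c.B (c.α j) (c.α i) • c.α i ∈ c.Φ :=
    c.reflect_mem _ (c.α_mem i) _ (c.α_mem j)
  have hsp : ⊤ ≤ Submodule.span ℚ (Set.range c.α) := le_of_eq c.α_span.symm
  set bas : Module.Basis I ℚ E := Module.Basis.mk c.α_indep hsp with hbas
  have hb_eq : ∀ k, bas k = c.α k := fun k => Module.Basis.mk_apply _ _ _
  have hri : bas.repr (c.α j - pr c.B (c.α j) (c.α i) • c.α i) i
      = -(pr c.B (c.α j) (c.α i)) := by
    rw [← hb_eq i, ← hb_eq j, map_sub, map_smul]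
    simp [Module.Basis.repr_self, Finsupp.single_apply, hij, Ne.symm hij]
  have hrj : bas.repr (c.α j - pr c.B (c.α j) (c.α i) • c.α i) j = 1 := by
    rw [← hb_eq i, ← hb_eq j, map_sub, map_smul]
    simp [Module.Basis.repr_self, Finsupp.single_apply, hij, Ne.symm hij]
  rcases c.pos_neg _ hβ with ⟨cf, hcf, hsum⟩ | ⟨cf, hcf, hsum⟩
  · have h7 : c.α j - pr c.B (c.α j) (c.α i) • c.α i = ∑ k, (cf k : ℚ) • bas k := by
      rw [hsum]
      exact Finset.sum_congr rfl fun k _ => by rw [hb_eq]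
    have h8 := bas.repr_sum_self fun k => (cf k : ℚ)
    rw [h7] at hri
    have h9 : bas.repr (∑ k, (cf k : ℚ) • bas k) i = (cf i : ℚ) := congrFun h8 i
    rw [h9] at hri
    have h10 : (0 : ℚ) ≤ (cf i : ℚ) := by exact_mod_cast hcf i
    rw [hri] at h10
    linarith
  · have h7 : c.α j - pr c.B (c.α j) (c.α i) • c.α i = ∑ k, (cf k : ℚ) • bas k := by
      rw [hsum]
      exact Finset.sum_congr rfl fun k _ => by rw [hb_eq]
    have h8 := bas.repr_sum_self fun k => (cf k : ℚ)
    rw [h7] at hrj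
    have h9 : bas.repr (∑ k, (cf k : ℚ) • bas k) j = (cf j : ℚ) := congrFun h8 j
    rw [h9] at hrj
    have h10 : (cf j : ℚ) ≤ 0 := by exact_mod_cast hcf j
    rw [hrj] at h10
    linarith

lemma cartan_cases (i j : I) (hij : i ≠ j) :
    (pr c.B (c.α j) (c.α i) = 0 ∧ pr c.B (c.α i) (c.α j) = 0) ∨
    (pr c.B (c.α j) (c.α i) = -1 ∧ pr c.B (c.α i) (c.α j) = -1) ∨
    (pr c.B (c.α j) (c.α i) = -1 ∧ pr c.B (c.α i) (c.α j) = -2) ∨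
    (pr c.B (c.α j) (c.α i) = -2 ∧ pr c.B (c.α i) (c.α j) = -1) ∨
    (pr c.B (c.α j) (c.α i) = -1 ∧ pr c.B (c.α i) (c.α j) = -3) ∨
    (pr c.B (c.α j) (c.α i) = -3 ∧ pr c.B (c.α i) (c.α j) = -1) := by
  have hBii : 0 < c.B (c.α i) (c.α i) := c.B_alpha_pos i
  have hBjj : 0 < c.B (c.α j) (c.α j) := c.B_alpha_pos j
  have hsym : c.B (c.α j) (c.α i) = c.B (c.α i) (c.α j) := c.Bsymm _ _
  -- Cauchy-Schwarz (strict)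
  have hCS : c.B (c.α i) (c.α j) * c.B (c.α i) (c.α j)
      < c.B (c.α i) (c.α i) * c.B (c.α j) (c.α j) := by
    have hx : c.B (c.α j) (c.α j) • c.α i - c.B (c.α i) (c.α j) • c.α j ≠ 0 := by
      intro h0
      have h1 : c.B (c.α j) (c.α j) • c.α i + (-(c.B (c.α i) (c.α j))) • c.α j = 0 := by
        rw [neg_smul, ← sub_eq_add_neg]; exact h0
      obtain ⟨hs, _⟩ := pair_indep c i j hij _ _ h1
      linarith
    have hpos := c.Bpos _ hx
    have hexp : c.B (c.B (c.α j) (c.α j) • c.α i - c.B (c.α i) (c.α j) • c.α j)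
          (c.B (c.α j) (c.α j) • c.α i - c.B (c.α i) (c.α j) • c.α j)
        = c.B (c.α j) (c.α j) *
          (c.B (c.α i) (c.α i) * c.B (c.α j) (c.α j)
            - c.B (c.α i) (c.α j) * c.B (c.α i) (c.α j)) := by
      simp only [map_sub, map_smul, LinearMap.sub_apply, LinearMap.smul_apply, smul_eq_mul]
      rw [hsym]
      ring
    rw [hexp] at hpos
    nlinarith
  -- integrality
  obtain ⟨na, hna⟩ := c.crystal _ (c.α_mem i) _ (c.α_mem j)
  obtain ⟨nb, hnb⟩ := c.crystal _ (c.α_mem j) _ (c.α_mem i)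
  -- pr B (α j) (α i) = na, pr B (α i) (α j) = nb
  have hA : pr c.B (c.α j) (c.α i) = 2 * c.B (c.α i) (c.α j) / c.B (c.α i) (c.α i) := by
    rw [pr, hsym]
  have hB : pr c.B (c.α i) (c.α j) = 2 * c.B (c.α i) (c.α j) / c.B (c.α j) (c.α j) := rfl
  have hna' : (na : ℚ) * c.B (c.α i) (c.α i) = 2 * c.B (c.α i) (c.α j) := by
    rw [← hna, hA]
    field_simp
  have hnb' : (nb : ℚ) * c.B (c.α j) (c.α j) = 2 * c.B (c.α i) (c.α j) := by
    rw [← hnb, hB]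
    field_simp
  have hana : pr c.B (c.α j) (c.α i) ≤ 0 := pr_alpha_nonpos c i j hij
  have hanb : pr c.B (c.α i) (c.α j) ≤ 0 := pr_alpha_nonpos c j i hij.symm
  have hna0 : (na : ℚ) ≤ 0 := by rw [hna] at hana; exact hana
  have hnb0 : (nb : ℚ) ≤ 0 := by rw [hnb] at hanb; exact hanb
  have hprod : (na : ℚ) * nb < 4 := by
    have h1 : ((na : ℚ) * nb) * (c.B (c.α i) (c.α i) * c.B (c.α j) (c.α j))
        = 4 * (c.B (c.α i) (c.α j) * c.B (c.α i) (c.α j)) := by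
      calc ((na : ℚ) * nb) * (c.B (c.α i) (c.α i) * c.B (c.α j) (c.α j))
          = ((na : ℚ) * c.B (c.α i) (c.α i)) * ((nb : ℚ) * c.B (c.α j) (c.α j)) := by ring
        _ = (2 * c.B (c.α i) (c.α j)) * (2 * c.B (c.α i) (c.α j)) := by rw [hna', hnb']
        _ = 4 * (c.B (c.α i) (c.α j) * c.B (c.α i) (c.α j)) := by ring
    nlinarith
  have hiff : (na : ℚ) = 0 → (nb : ℚ) = 0 := by
    intro h
    rw [h] at hna'
    have : c.B (c.α i) (c.α j) = 0 := by linarith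
    rw [this] at hnb'
    have := hnb'
    nlinarith
  have hiff' : (nb : ℚ) = 0 → (na : ℚ) = 0 := by
    intro h
    rw [h] at hnb'
    have : c.B (c.α i) (c.α j) = 0 := by linarith
    rw [this] at hna'
    nlinarith
  have Hna : na ≤ 0 := by exact_mod_cast hna0
  have Hnb : nb ≤ 0 := by exact_mod_cast hnb0
  have Hprod : na * nb < 4 := by exact_mod_cast hprod
  have Hiff : na = 0 → nb = 0 := fun h => by
    have : (nb : ℚ) = 0 := hiff (by exact_mod_cast h)
    exact_mod_cast this
  have Hiff' : nb = 0 → na = 0 := fun h => by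
    have : (na : ℚ) = 0 := hiff' (by exact_mod_cast h)
    exact_mod_cast this
  have Hna3 : -3 ≤ na := by
    rcases eq_or_lt_of_le Hnb with h | h
    · have := Hiff' h; omega
    · nlinarith
  have Hnb3 : -3 ≤ nb := by
    rcases eq_or_lt_of_le Hna with h | h
    · have := Hiff h; omega
    · nlinarith
  have hout : (na = 0 ∧ nb = 0) ∨ (na = -1 ∧ nb = -1) ∨ (na = -1 ∧ nb = -2) ∨
      (na = -2 ∧ nb = -1) ∨ (na = -1 ∧ nb = -3) ∨ (na = -3 ∧ nb = -1) := by
    interval_cases na <;> interval_cases nb <;> omega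
  rw [hna, hnb]
  rcases hout with ⟨h1, h2⟩ | ⟨h1, h2⟩ | ⟨h1, h2⟩ | ⟨h1, h2⟩ | ⟨h1, h2⟩ | ⟨h1, h2⟩ <;>
    rw [h1, h2] <;> norm_num

end Cartan
section ListRed

lemma listred2 {G : Type*} [Monoid G] (A B : G) :
    (List.ofFn fun k : Fin 2 => if (k : ℕ) % 2 = 0 then A else B).prod = A * B := by
  show A * (B * 1) = _
  rw [mul_one]

lemma listred3 {G : Type*} [Monoid G] (A B : G) :
    (List.ofFn fun k : Fin 3 => if (k : ℕ) % 2 = 0 then A else B).prod = A * (B * A) := by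
  show A * (B * (A * 1)) = _
  rw [mul_one]

lemma listred4 {G : Type*} [Monoid G] (A B : G) :
    (List.ofFn fun k : Fin 4 => if (k : ℕ) % 2 = 0 then A else B).prod
      = A * (B * (A * B)) := by
  show A * (B * (A * (B * 1))) = _
  rw [mul_one]

lemma listred6 {G : Type*} [Monoid G] (A B : G) :
    (List.ofFn fun k : Fin 6 => if (k : ℕ) % 2 = 0 then A else B).prod
      = A * (B * (A * (B * (A * B)))) := by
  show A * (B * (A * (B * (A * (B * 1))))) = _
  rw [mul_one]

end ListRed
/-- Proposition 3.2: the elements nᵢ satisfy the braid relations. -/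
theorem stmt_8 {E I : Type} [AddCommGroup E] [Module ℚ E] [Fintype I]
    (c : RootSystemCtx E I) (P : PsiData c)
    (M : Type) [AddCommGroup M] [Module ℂ M] (z : Module.Basis P.Ψ ℂ M)
    (e f : I → Module.End ℂ M)
    (he1 : ∀ (i : I) (μ : P.Ψ) (hm : (μ : E) + c.α i ∈ P.Ψ),
      pr c.B (μ : E) (c.α i) = -1 → e i (z μ) = z ⟨(μ : E) + c.α i, hm⟩)
    (he0 : ∀ (i : I) (μ : P.Ψ), pr c.B (μ : E) (c.α i) ≠ -1 → e i (z μ) = 0)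
    (hf1 : ∀ (i : I) (μ : P.Ψ) (hm : (μ : E) - c.α i ∈ P.Ψ),
      pr c.B (μ : E) (c.α i) = 1 → f i (z μ) = z ⟨(μ : E) - c.α i, hm⟩)
    (hf0 : ∀ (i : I) (μ : P.Ψ), pr c.B (μ : E) (c.α i) ≠ 1 → f i (z μ) = 0)
    (i j : I) (hij : i ≠ j) :
    2 ≤ orderOf (c.s i * c.s j) ∧
    (List.ofFn fun k : Fin (orderOf (c.s i * c.s j)) =>
      if (k : ℕ) % 2 = 0 then nOp e f i 1 1 else nOp e f j 1 1).prod =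
    (List.ofFn fun k : Fin (orderOf (c.s i * c.s j)) =>
      if (k : ℕ) % 2 = 0 then nOp e f j 1 1 else nOp e f i 1 1).prod := by
  have hstep := nOp_apply_z c P z e f he1 he0 hf1 hf0
  have hcomm : orderOf (c.s j * c.s i) = orderOf (c.s i * c.s j) :=
    SemiconjBy.orderOf_eq (c.s i) ((mul_assoc (c.s i) (c.s j) (c.s i)).symm)
  rcases cartan_cases c i j hij with ⟨ha, hb⟩ | ⟨ha, hb⟩ | ⟨ha, hb⟩ | ⟨ha, hb⟩ |
    ⟨ha, hb⟩ | ⟨ha, hb⟩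
  · have horder : orderOf (c.s i * c.s j) = 2 := ord_case2 c i j hij ha hb
    rw [horder]
    refine ⟨by norm_num, ?_⟩
    rw [listred2, listred2]
    exact braid_case2 c P z e f hstep i j ha hb
  · have horder : orderOf (c.s i * c.s j) = 3 := ord_case3 c i j hij ha hb
    rw [horder]
    refine ⟨by norm_num, ?_⟩
    rw [listred3, listred3]
    exact braid_case3 c P z e f hstep i j ha hb
  · have horder : orderOf (c.s i * c.s j) = 4 := ord_case4 c i j hij ha hb
    rw [horder]
    refine ⟨by norm_num, ?_⟩
    rw [listred4, listred4]
    exact braid_case4 c P z e f hstep i j ha hb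
  · have horder : orderOf (c.s i * c.s j) = 4 := by
      rw [← hcomm]; exact ord_case4 c j i hij.symm hb ha
    rw [horder]
    refine ⟨by norm_num, ?_⟩
    rw [listred4, listred4]
    exact (braid_case4 c P z e f hstep j i hb ha).symm
  · have horder : orderOf (c.s i * c.s j) = 6 := ord_case6 c i j hij ha hb
    rw [horder]
    refine ⟨by norm_num, ?_⟩
    rw [listred6, listred6]
    exact braid_case6 c P z e f hstep i j ha hb
  · have horder : orderOf (c.s i * c.s j) = 6 := by
      rw [← hcomm]; exact ord_case6 c j i hij.symm hb ha
    rw [horder]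
    refine ⟨by norm_num, ?_⟩
    rw [listred6, listred6]
    exact (braid_case6 c P z e f hstep j i hb ha).symm
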